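/- Let (X,d) be a geometrically doubling metric space with constant M. There exists δ₀ ∈ (0,1), depending only on M, such that for every δ ∈ (0,δ₀) the following holds: given, for each k ∈ ℤ, a maximal δ^k-separated set {z_α^k : α ∈ A_k} with the nestedness property {z_α^k : α ∈ A_k} ⊆ {z_β^{k+1} : β ∈ A_{k+1}}, there exists a countable collection D = {Q_α^k : k ∈ ℤ, α ∈ A_k} of subsets of X such that: (i) X = ⋃_α Q_α^k for every k ∈ ℤ; (ii) for all P,Q ∈ D, P ∩ Q ∈ {∅, P, Q}; (iii) B(z_α^k, δ^k/5) ⊆ Q_α^k ⊆ B(z_α^k, 3δ^k); (iv) Q_α^k = ⋃ {Q_β^{k+m} : Q_β^{k+m} ⊆ Q_α^k} for every m ∈ ℕ. -/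

import Mathlib

open Metric

/-- A metric space is geometrically doubling with constant `M` if every open ball of radius `r`
can be covered by at most `M` open balls of radius `r / 2`. -/
def GeomDoubling (X : Type*) [MetricSpace X] (M : ℕ) : Prop :=
  ∀ (x : X) (r : ℝ), ∃ s : Finset X, s.card ≤ M ∧ ball x r ⊆ ⋃ y ∈ s, ball y (r / 2)

namespace Stmt5Aux
set_option linter.unusedSectionVars false
noncomputable section

variable {X : Type} [MetricSpace X]
attribute [local instance] Classical.propDecidable


/-- Iterated covering: finitely many balls of radius `r / 2^n` cover `ball x r`. -/
lemma cover_iter {M : ℕ} (hD : GeomDoubling X M) (n : ℕ) (x : X) (r : ℝ) :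
    ∃ s : Finset X, ball x r ⊆ ⋃ y ∈ s, ball y (r / 2 ^ n) := by
  induction n generalizing x r with
  | zero => exact ⟨{x}, by simp⟩
  | succ n ih =>
    obtain ⟨s, -, hs⟩ := hD x r
    choose t ht using fun y : X => ih y (r / 2)
    refine ⟨s.biUnion t, fun z hz => ?_⟩
    obtain ⟨y, hy, hzy⟩ := Set.mem_iUnion₂.1 (hs hz)
    have := ht y hzy
    obtain ⟨u, hu, hzu⟩ := Set.mem_iUnion₂.1 this
    refine Set.mem_iUnion₂.2 ⟨u, Finset.mem_biUnion.2 ⟨y, hy, hu⟩, ?_⟩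
    have : r / 2 / 2 ^ n = r / 2 ^ (n + 1) := by ring
    rwa [this] at hzu

/-- A separated set meets every ball in a finite set. -/
lemma sep_finite {M : ℕ} (hD : GeomDoubling X M) {ε : ℝ} (hε : 0 < ε) {A : Set X}
    (hA : ∀ z ∈ A, ∀ w ∈ A, z ≠ w → ε ≤ dist z w) (x : X) (r : ℝ) :
    (A ∩ ball x r).Finite := by
  obtain ⟨n, hn⟩ : ∃ n : ℕ, r / 2 ^ n < ε / 2 := by
    rcases le_or_gt r 0 with h | h
    · exact ⟨0, by simpa using lt_of_le_of_lt (by linarith) (half_pos hε)⟩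
    · obtain ⟨n, hn⟩ := pow_unbounded_of_one_lt (r / (ε / 2)) one_lt_two
      exact ⟨n, by rw [div_lt_iff₀ (by positivity)] at hn ⊢; linarith⟩
  obtain ⟨s, hs⟩ := cover_iter hD n x r
  have : A ∩ ball x r ⊆ ⋃ y ∈ (s : Set X), A ∩ ball y (r / 2 ^ n) := by
    intro z ⟨hzA, hzb⟩
    obtain ⟨y, hy, hzy⟩ := Set.mem_iUnion₂.1 (hs hzb)
    exact Set.mem_iUnion₂.2 ⟨y, hy, hzA, hzy⟩
  refine Set.Finite.subset (Set.Finite.biUnion s.finite_toSet fun y _ => ?_) this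
  refine Set.Subsingleton.finite fun a ⟨haA, hab⟩ b ⟨hbA, hbb⟩ => ?_
  by_contra hne
  have := hA a haA b hbA hne
  have : dist a b < ε := by
    calc dist a b ≤ dist a y + dist y b := dist_triangle _ _ _
    _ < r / 2 ^ n + r / 2 ^ n := by
        rw [mem_ball] at hab hbb; rw [dist_comm y b]; linarith
    _ < ε := by linarith
  linarith [hA a haA b hbA hne]


variable {δ : ℝ} {Z : ℤ → Set X} {near : ℤ → X → X}

/-- Monotonicity of the nets. -/
lemma Zmono (hmono : ∀ k, Z k ⊆ Z (k + 1)) {k m : ℤ} (h : k ≤ m) : Z k ⊆ Z m := by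
  have key : ∀ n : ℕ, Z k ⊆ Z (k + n) := by
    intro n
    induction n with
    | zero => simp
    | succ n ih =>
      refine ih.trans ?_
      have : (k + (n+1 : ℕ) : ℤ) = (k + n) + 1 := by push_cast; ring
      rw [this]
      exact hmono _
  have := key (m - k).toNat
  rwa [show (k + ((m - k).toNat : ℤ)) = m by omega] at this

section Near
variable (hδ0 : 0 < δ)
  (hsep : ∀ k, ∀ z ∈ Z k, ∀ w ∈ Z k, z ≠ w → δ ^ k ≤ dist z w)
  (hnZ : ∀ l (x : X), near l x ∈ Z l)
  (hnd : ∀ l (x : X), dist x (near l x) < δ ^ l)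
  (hnm : ∀ l (x : X), ∀ z ∈ Z l, dist x (near l x) ≤ dist x z)

include hnZ hnm in
lemma near_self {l : ℤ} {z : X} (hz : z ∈ Z l) : near l z = z := by
  have h := hnm l z z hz
  simp only [dist_self] at h
  have : dist z (near l z) = 0 := le_antisymm h dist_nonneg
  exact (dist_eq_zero.1 this).symm

include hsep hnZ hnm in
lemma near_eq {l : ℤ} {z x : X} (hz : z ∈ Z l) (hx : dist x z < δ ^ l / 2) :
    near l x = z := by
  by_contra hne
  have h1 : dist x (near l x) ≤ dist x z := hnm l x z hz
  have h2 : dist (near l x) z ≤ dist (near l x) x + dist x z := dist_triangle _ _ _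
  have h3 : δ ^ l ≤ dist (near l x) z := hsep l _ (hnZ l x) z hz hne
  rw [dist_comm (near l x) x] at h2
  linarith

end Near

/-- Iterated ancestor map: apply `near` at levels `l-1, l-2, ..., l-n`. -/
def anc (near : ℤ → X → X) : ℕ → ℤ → X → X
  | 0, _, x => x
  | n+1, l, x => near (l - (n + 1)) (anc near n l x)

@[simp] lemma anc_zero (near : ℤ → X → X) (l : ℤ) (x : X) : anc near 0 l x = x := rfl

lemma anc_succ (near : ℤ → X → X) (n : ℕ) (l : ℤ) (x : X) :
    anc near (n + 1) l x = near (l - (n + 1)) (anc near n l x) := rfl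

section Anc
variable (hδ0 : 0 < δ) (hδ : δ < 1/8)
  (hsep : ∀ k, ∀ z ∈ Z k, ∀ w ∈ Z k, z ≠ w → δ ^ k ≤ dist z w)
  (hmono : ∀ k, Z k ⊆ Z (k + 1))
  (hnZ : ∀ l (x : X), near l x ∈ Z l)
  (hnd : ∀ l (x : X), dist x (near l x) < δ ^ l)
  (hnm : ∀ l (x : X), ∀ z ∈ Z l, dist x (near l x) ≤ dist x z)

include hnZ in
lemma anc_mem {n : ℕ} {l : ℤ} {x : X} (hx : x ∈ Z l) : anc near n l x ∈ Z (l - n) := by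
  cases n with
  | zero => simpa using hx
  | succ n => exact hnZ _ _

include hmono hnZ hnm in
lemma anc_fix {n : ℕ} {k l : ℤ} {z : X} (hz : z ∈ Z k) (h : k ≤ l - n) :
    anc near n l z = z := by
  induction n with
  | zero => rfl
  | succ n ih =>
    have h' : k ≤ l - n := by push_cast at h ⊢; omega
    rw [anc_succ, ih h']
    exact near_self hnZ hnm (Zmono hmono (by push_cast at h ⊢; omega) hz)

include hδ0 hδ hnd in
lemma anc_dist (n : ℕ) (l : ℤ) (x : X) :
    dist x (anc near n l x) ≤ (δ ^ (l - (n : ℤ)) - δ ^ l) / (1 - δ) := by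
  have h1δ : (0:ℝ) < 1 - δ := by linarith
  induction n with
  | zero => simp
  | succ n ih =>
    have key : dist x (anc near (n+1) l x) ≤
        dist x (anc near n l x) + δ ^ (l - ((n:ℤ) + 1)) := by
      rw [anc_succ]
      have := hnd (l - ((n:ℤ)+1)) (anc near n l x)
      calc dist x (near (l - ((n:ℤ)+1)) (anc near n l x)) ≤
          dist x (anc near n l x) + dist (anc near n l x) (near (l - ((n:ℤ)+1)) (anc near n l x)) :=
            dist_triangle _ _ _
        _ ≤ dist x (anc near n l x) + δ ^ (l - ((n:ℤ) + 1)) := by linarith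
    have e1 : δ ^ (l - (n:ℤ)) = δ ^ (l - ((n:ℤ)+1)) * δ := by
      rw [← zpow_add_one₀ (ne_of_gt hδ0)]; ring_nf
    have e2 : δ ^ l = δ ^ (l - ((n:ℤ)+1)) * δ ^ ((n:ℕ) + 1) := by
      rw [← zpow_natCast δ ((n:ℕ)+1), ← zpow_add₀ (ne_of_gt hδ0)]
      push_cast; ring_nf
    have goal_eq : (δ ^ (l - (n:ℤ)) - δ ^ l) / (1 - δ) + δ ^ (l - ((n:ℤ)+1)) =
        (δ ^ (l - ((n:ℤ)+1)) - δ ^ l) / (1 - δ) := by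
      rw [e1, e2]
      field_simp
      ring
    have : ((n:ℤ) + 1) = ((n+1 : ℕ) : ℤ) := by push_cast; ring
    calc dist x (anc near (n+1) l x) ≤ dist x (anc near n l x) + δ ^ (l - ((n:ℤ)+1)) := key
      _ ≤ (δ ^ (l - (n:ℤ)) - δ ^ l) / (1 - δ) + δ ^ (l - ((n:ℤ)+1)) := by linarith
      _ = (δ ^ (l - ((n:ℤ)+1)) - δ ^ l) / (1 - δ) := goal_eq
      _ = (δ ^ (l - ((n+1:ℕ):ℤ)) - δ ^ l) / (1 - δ) := by rw [← this]

include hδ0 hδ hnd in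
lemma anc_dist' (n : ℕ) (l : ℤ) (x : X) :
    dist x (anc near n l x) ≤ 2 * δ ^ (l - (n : ℤ)) := by
  have h1 := anc_dist hδ0 hδ hnd n l x
  have h2 : (0:ℝ) < δ ^ l := zpow_pos hδ0 l
  have h3 : (0:ℝ) < δ ^ (l - (n:ℤ)) := zpow_pos hδ0 _
  have h4 : (0:ℝ) < 1 - δ := by linarith
  have h5 : (δ ^ (l - (n : ℤ)) - δ ^ l) / (1 - δ) ≤ 2 * δ ^ (l - (n:ℤ)) := by
    rw [div_le_iff₀ h4]; nlinarith
  linarith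

end Anc

/-- The set of net points descending to `z` via the ancestor maps. -/
def Ecube (Z : ℤ → Set X) (near : ℤ → X → X) (k : ℤ) (z : X) : Set X :=
  {w | ∃ n : ℕ, w ∈ Z (k + n) ∧ anc near n (k + n) w = z}

/-- The set of level-`k` net points whose closed cube contains `x`. -/
def Sset (Z : ℤ → Set X) (near : ℤ → X → X) (k : ℤ) (x : X) : Set X :=
  {z | z ∈ Z k ∧ x ∈ closure (Ecube Z near k z)}

section Cubes
variable (hδ0 : 0 < δ) (hδ : δ < 1/8)
  (hsep : ∀ k, ∀ z ∈ Z k, ∀ w ∈ Z k, z ≠ w → δ ^ k ≤ dist z w)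
  (hmax : ∀ (k : ℤ) (x : X), ∃ z ∈ Z k, dist x z < δ ^ k)
  (hmono : ∀ k, Z k ⊆ Z (k + 1))
  (hnZ : ∀ l (x : X), near l x ∈ Z l)
  (hnd : ∀ l (x : X), dist x (near l x) < δ ^ l)
  (hnm : ∀ l (x : X), ∀ z ∈ Z l, dist x (near l x) ≤ dist x z)

lemma E_self {k : ℤ} {z : X} (hz : z ∈ Z k) : z ∈ Ecube Z near k z :=
  ⟨0, by simpa using hz, rfl⟩

include hδ0 hδ hnd in
lemma E_dist {k : ℤ} {z w : X} (hw : w ∈ Ecube Z near k z) : dist w z ≤ 2 * δ ^ k := by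
  obtain ⟨n, hwZ, hanc⟩ := hw
  have := anc_dist' hδ0 hδ hnd n (k + n) w
  rw [hanc] at this
  rwa [show k + (n:ℤ) - (n:ℤ) = k by ring] at this

include hδ0 hδ hnd in
lemma closure_E_subset {k : ℤ} {z : X} :
    closure (Ecube Z near k z) ⊆ Metric.closedBall z (2 * δ ^ k) := by
  apply closure_minimal _ isClosed_closedBall
  intro w hw
  exact mem_closedBall.2 (E_dist hδ0 hδ hnd hw)

/-- A child's cube is contained in the parent's cube. -/
lemma E_child {k : ℤ} {w z : X} (hnw : near k w = z) :
    Ecube Z near (k + 1) w ⊆ Ecube Z near k z := by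
  rintro u ⟨n, huZ, hanc⟩
  refine ⟨n + 1, ?_, ?_⟩
  · rwa [show (k + ((n:ℕ)+1 : ℕ) : ℤ) = (k + 1) + n by push_cast; ring]
  · have e : (k + ((n:ℕ)+1 : ℕ) : ℤ) = (k + 1) + n := by push_cast; ring
    rw [anc_succ]
    rw [show (k + ((n:ℕ)+1 : ℕ) : ℤ) - ((n:ℤ)+1) = k by push_cast; ring]
    rw [e, hanc, hnw]

include hmono hnZ hnm in
/-- Decomposition of a cube into children cubes. -/
lemma E_decomp {k : ℤ} {z : X} (hz : z ∈ Z k) :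
    Ecube Z near k z ⊆ ⋃ w ∈ {w ∈ Z (k+1) | near k w = z}, Ecube Z near (k + 1) w := by
  rintro u ⟨n, huZ, hanc⟩
  rw [Set.mem_iUnion₂]
  cases n with
  | zero =>
    simp only [anc_zero] at hanc
    subst hanc
    have huk : u ∈ Z k := by simpa using huZ
    exact ⟨u, ⟨hmono k huk, near_self hnZ hnm huk⟩, E_self (hmono k huk)⟩
  | succ m =>
    set w := anc near m (k + (m+1:ℕ)) u with hw
    have hwZ : w ∈ Z (k + 1) := by
      have := anc_mem hnZ (n := m) (l := (k + (m+1:ℕ) : ℤ)) (x := u) huZ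
      rwa [show (k + (m+1:ℕ) : ℤ) - (m:ℕ) = k + 1 by push_cast; ring] at this
    have hnww : near k w = z := by
      rw [anc_succ] at hanc
      rwa [show (k + (m+1:ℕ) : ℤ) - ((m:ℕ)+1) = k by push_cast; ring] at hanc
    refine ⟨w, ⟨hwZ, hnww⟩, ⟨m, ?_, ?_⟩⟩
    · rwa [show ((k+1) + (m:ℕ) : ℤ) = k + (m+1:ℕ) by push_cast; ring]
    · rw [show ((k+1) + (m:ℕ) : ℤ) = k + (m+1:ℕ) by push_cast; ring]


include hδ0 hδ hnd in
lemma S_dist {k : ℤ} {x z : X} (hz : z ∈ Sset Z near k x) : dist x z ≤ 2 * δ ^ k :=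
  mem_closedBall.1 (closure_E_subset hδ0 hδ hnd hz.2)

include hδ0 hδ hnd in
lemma S_finite {M : ℕ} (hD : GeomDoubling X M)
    (hsep : ∀ k, ∀ z ∈ Z k, ∀ w ∈ Z k, z ≠ w → δ ^ k ≤ dist z w) (k : ℤ) (x : X) :
    (Sset Z near k x).Finite := by
  have h := sep_finite hD (zpow_pos hδ0 k) (hsep k) x (3 * δ ^ k)
  refine h.subset fun z hz => ⟨hz.1, ?_⟩
  rw [mem_ball, dist_comm]
  have := S_dist hδ0 hδ hnd hz
  have hp : (0:ℝ) < δ ^ k := zpow_pos hδ0 k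
  linarith

include hδ0 hδ hmax hnZ hnd in
lemma S_nonempty {M : ℕ} (hD : GeomDoubling X M)
    (hsep : ∀ k, ∀ z ∈ Z k, ∀ w ∈ Z k, z ≠ w → δ ^ k ≤ dist z w) (k : ℤ) (x : X) :
    (Sset Z near k x).Nonempty := by
  have hδ1 : δ < 1 := by linarith
  have hpk : (0:ℝ) < δ ^ k := zpow_pos hδ0 k
  -- pick net points near x at every level k + n
  choose w hwZ hwd using fun n : ℕ => hmax (k + n) x
  -- their level-k ancestors
  set a : ℕ → X := fun n => anc near n (k + n) (w n) with ha
  have haZ : ∀ n, a n ∈ Z k := by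
    intro n
    have := anc_mem hnZ (n := n) (l := (k + n : ℤ)) (hwZ n)
    rwa [show (k + (n:ℤ)) - (n:ℤ) = k by ring] at this
  have had : ∀ n, dist x (a n) < 3 * δ ^ k := by
    intro n
    have h1 := hwd n
    have h2 := anc_dist' hδ0 hδ hnd n (k + n) (w n)
    rw [show (k + (n:ℤ)) - (n:ℤ) = k by ring] at h2
    have h3 : δ ^ (k + (n:ℤ)) ≤ δ ^ k :=
      zpow_le_zpow_right_of_le_one₀ hδ0 (le_of_lt hδ1) (by omega)
    calc dist x (a n) ≤ dist x (w n) + dist (w n) (a n) := dist_triangle _ _ _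
      _ < 3 * δ ^ k := by linarith
  -- finitely many possible ancestors
  have hF : (Z k ∩ ball x (3 * δ ^ k)).Finite :=
    sep_finite hD (zpow_pos hδ0 k) (hsep k) x (3 * δ ^ k)
  have : Finite ↥(Z k ∩ ball x (3 * δ ^ k)) := hF.to_subtype
  set g : ℕ → ↥(Z k ∩ ball x (3 * δ ^ k)) :=
    fun n => ⟨a n, haZ n, by rw [mem_ball, dist_comm]; exact had n⟩ with hg
  obtain ⟨z, hzinf⟩ := Finite.exists_infinite_fiber g
  have hzinf' : (g ⁻¹' {z}).Infinite := Set.infinite_coe_iff.1 hzinf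
  refine ⟨z.1, z.2.1, ?_⟩
  rw [Metric.mem_closure_iff]
  intro ε hε
  obtain ⟨N, hN⟩ : ∃ N : ℕ, δ ^ N < ε / δ ^ k :=
    exists_pow_lt_of_lt_one (by positivity) hδ1
  obtain ⟨n, hn, hNn⟩ := hzinf'.exists_gt N
  refine ⟨w n, ⟨n, hwZ n, ?_⟩, ?_⟩
  · have hgz : g n = z := by simpa using hn
    exact congrArg Subtype.val hgz
  · have h1 := hwd n
    have h2 : δ ^ (k + (n:ℤ)) ≤ δ ^ (k + (N:ℤ)) :=
      zpow_le_zpow_right_of_le_one₀ hδ0 (le_of_lt hδ1) (by omega)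
    have h3 : δ ^ (k + (N:ℤ)) < ε := by
      rw [zpow_add₀ (ne_of_gt hδ0), zpow_natCast]
      calc δ ^ k * δ ^ N < δ ^ k * (ε / δ ^ k) := by
            exact mul_lt_mul_of_pos_left hN hpk
        _ = ε := by field_simp
    linarith

include hmono hnZ hnm in
lemma S_parent {k : ℤ} {x z : X} (hz : z ∈ Sset Z near (k + 1) x) :
    near k z ∈ Sset Z near k x := by
  refine ⟨hnZ k z, ?_⟩
  exact closure_mono (E_child rfl) hz.2

include hδ0 hmono hnZ hnd hnm in
lemma S_child {M : ℕ} (hD : GeomDoubling X M)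
    (hsep : ∀ k, ∀ z ∈ Z k, ∀ w ∈ Z k, z ≠ w → δ ^ k ≤ dist z w)
    {k : ℤ} {x z : X} (hz : z ∈ Sset Z near k x) :
    ∃ w, w ∈ Sset Z near (k + 1) x ∧ near k w = z := by
  have hCfin : {w ∈ Z (k+1) | near k w = z}.Finite := by
    have h := sep_finite hD (zpow_pos hδ0 (k+1)) (hsep (k+1)) z (δ ^ k)
    refine h.subset fun w hw => ⟨hw.1, ?_⟩
    rw [mem_ball]
    have := hnd k w
    rwa [hw.2] at this
  have hsub : closure (Ecube Z near k z) ⊆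
      ⋃ w ∈ {w ∈ Z (k+1) | near k w = z}, closure (Ecube Z near (k + 1) w) := by
    rw [← hCfin.closure_biUnion]
    exact closure_mono (E_decomp hmono hnZ hnm hz.1)
  obtain ⟨w, hwC, hwcl⟩ := Set.mem_iUnion₂.1 (hsub hz.2)
  exact ⟨w, ⟨hwC.1, hwcl⟩, hwC.2⟩

end Cubes

/-- Upward chain: iterated choice of children containing `x`. -/
def upc (p0 : X → X) (pk : ℤ → X → X → X) : ℕ → X → X
  | 0, x => p0 x
  | n+1, x => pk n x (upc p0 pk n x)

/-- The full chain over `ℤ`. -/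
def chain (near : ℤ → X → X) (p0 : X → X) (pk : ℤ → X → X → X) (k : ℤ) (x : X) : X :=
  if 0 ≤ k then upc p0 pk k.toNat x else anc near (-k).toNat 0 (p0 x)

section Chain
variable {p0 : X → X} {pk : ℤ → X → X → X}
variable (hmono : ∀ k, Z k ⊆ Z (k + 1))
  (hnZ : ∀ l (x : X), near l x ∈ Z l)
  (hnm : ∀ l (x : X), ∀ z ∈ Z l, dist x (near l x) ≤ dist x z)
  (hp0 : ∀ x, p0 x ∈ Sset Z near 0 x)
  (hpk : ∀ (k : ℤ) (x z : X), z ∈ Sset Z near k x →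
    pk k x z ∈ Sset Z near (k+1) x ∧ near k (pk k x z) = z)

include hp0 hpk in
lemma up_mem (n : ℕ) (x : X) : upc p0 pk n x ∈ Sset Z near (n : ℤ) x := by
  induction n with
  | zero => exact hp0 x
  | succ n ih =>
    have := (hpk n x _ ih).1
    rwa [show ((n:ℤ)+1) = ((n+1 : ℕ) : ℤ) by push_cast; ring] at this

include hmono hnZ hnm in
lemma S_anc {l : ℤ} {x z : X} (hz : z ∈ Sset Z near l x) (n : ℕ) :
    anc near n l z ∈ Sset Z near (l - n) x := by
  induction n with
  | zero => simpa using hz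
  | succ n ih =>
    rw [anc_succ]
    have := S_parent hmono hnZ hnm (k := l - ((n:ℤ)+1))
      (by rwa [show (l - ((n:ℤ)+1)) + 1 = l - n by ring])
    rwa [show ((n:ℤ)+1) = ((n+1 : ℕ) : ℤ) by push_cast; ring] at this

include hmono hnZ hnm hp0 hpk in
lemma chain_mem (k : ℤ) (x : X) : chain near p0 pk k x ∈ Sset Z near k x := by
  unfold chain
  by_cases h : 0 ≤ k
  · rw [if_pos h]
    have := up_mem hp0 hpk k.toNat x
    rwa [Int.toNat_of_nonneg h] at this
  · rw [if_neg h]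
    have := S_anc hmono hnZ hnm (hp0 x) (-k).toNat
    rwa [show (0 - ((-k).toNat : ℤ)) = k by omega] at this

lemma chain_neg {k : ℤ} (h : k ≤ 0) (x : X) :
    chain near p0 pk k x = anc near (-k).toNat 0 (p0 x) := by
  unfold chain
  rcases lt_or_eq_of_le h with h' | h'
  · rw [if_neg (by omega)]
  · subst h'; simp [upc]

include hmono hnZ hnm hp0 hpk in
lemma chain_step (k : ℤ) (x : X) :
    near k (chain near p0 pk (k+1) x) = chain near p0 pk k x := by
  by_cases h : 0 ≤ k
  · have h1 : chain near p0 pk (k+1) x = upc p0 pk (k.toNat + 1) x := by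
      unfold chain
      rw [if_pos (by omega), show (k+1).toNat = k.toNat + 1 by omega]
    have h2 : chain near p0 pk k x = upc p0 pk k.toNat x := by
      unfold chain; rw [if_pos h]
    rw [h1, h2]
    have := (hpk k.toNat x _ (up_mem hp0 hpk k.toNat x)).2
    show near k (pk (k.toNat : ℤ) x (upc p0 pk k.toNat x)) = upc p0 pk k.toNat x
    rw [Int.toNat_of_nonneg h]
    rw [Int.toNat_of_nonneg h] at this
    exact this
  · push_neg at h
    have h1 : chain near p0 pk k x = anc near (-k).toNat 0 (p0 x) :=
      chain_neg (by omega) x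
    have h2 : chain near p0 pk (k+1) x = anc near (-(k+1)).toNat 0 (p0 x) :=
      chain_neg (by omega) x
    have hm : (-k).toNat = (-(k+1)).toNat + 1 := by omega
    rw [h1, h2, hm, anc_succ]
    congr 1
    omega

include hmono hnZ hnm hp0 hpk in
lemma chain_anc (n : ℕ) (k : ℤ) (x : X) :
    anc near n (k + n) (chain near p0 pk (k + n) x) = chain near p0 pk k x := by
  induction n generalizing k with
  | zero => simp
  | succ n ih =>
    have e : (k + ((n:ℕ)+1 : ℕ) : ℤ) = (k + 1) + n := by push_cast; ring
    rw [anc_succ, show (k + ((n:ℕ)+1 : ℕ) : ℤ) - ((n:ℤ)+1) = k by push_cast; ring, e,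
      ih (k+1)]
    exact chain_step hmono hnZ hnm hp0 hpk k x

end Chain
end
end Stmt5Aux

open Stmt5Aux in
/-- Construction of dyadic cubes: there is `δ₀ ∈ (0,1)` depending only on `M` such that for
every `δ ∈ (0,δ₀)` and every family of nested maximal `δ^k`-separated sets `Z k ⊆ X`, `k ∈ ℤ`,
there exists a countable collection of dyadic cubes `Q k z` (for `z ∈ Z k`) satisfying
(i) each level covers `X`; (ii) any two cubes are disjoint or one contains the other;
(iii) `B(z, δ^k/5) ⊆ Q k z ⊆ B(z, 3δ^k)`; (iv) every cube is the union of its level-`(k+m)`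
descendants. -/
theorem stmt5 (M : ℕ) :
    ∃ δ₀ : ℝ, δ₀ ∈ Set.Ioo (0 : ℝ) 1 ∧
    ∀ (X : Type) [MetricSpace X], GeomDoubling X M →
    ∀ δ : ℝ, 0 < δ → δ < δ₀ →
    ∀ Z : ℤ → Set X,
      (∀ k, ∀ z ∈ Z k, ∀ w ∈ Z k, z ≠ w → δ ^ k ≤ dist z w) →
      (∀ (k : ℤ) (x : X), ∃ z ∈ Z k, dist x z < δ ^ k) →
      (∀ k, Z k ⊆ Z (k + 1)) →
      ∃ Q : ℤ → X → Set X,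
        Set.Countable {p : ℤ × X | p.2 ∈ Z p.1} ∧
        (∀ k : ℤ, (⋃ z ∈ Z k, Q k z) = Set.univ) ∧
        (∀ (k l : ℤ) (z w : X), z ∈ Z k → w ∈ Z l →
          Q k z ∩ Q l w = ∅ ∨ Q k z ⊆ Q l w ∨ Q l w ⊆ Q k z) ∧
        (∀ k : ℤ, ∀ z ∈ Z k, ball z (δ ^ k / 5) ⊆ Q k z ∧ Q k z ⊆ ball z (3 * δ ^ k)) ∧
        (∀ (k : ℤ) (m : ℕ), ∀ z ∈ Z k,
          Q k z = ⋃ w ∈ {w ∈ Z (k + (m : ℤ)) | Q (k + (m : ℤ)) w ⊆ Q k z}, Q (k + (m : ℤ)) w) := by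
  refine ⟨1/8, ⟨by norm_num, by norm_num⟩, ?_⟩
  intro X _ hD δ hδ0 hδ Z hsep hmax hmono
  classical
  -- construction of the nearest-point maps
  have hnear : ∀ (l : ℤ) (x : X),
      ∃ z, z ∈ Z l ∧ dist x z < δ ^ l ∧ ∀ w ∈ Z l, dist x z ≤ dist x w := by
    intro l x
    have hpl : (0:ℝ) < δ ^ l := zpow_pos hδ0 l
    obtain ⟨z0, hz0, hz0d⟩ := hmax l x
    have hFin : (Z l ∩ ball x (δ ^ l)).Finite := sep_finite hD hpl (hsep l) x _
    have hne : (Z l ∩ ball x (δ ^ l)).Nonempty := ⟨z0, hz0, by rwa [mem_ball, dist_comm]⟩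
    obtain ⟨z, hzF, hzmin⟩ := Set.exists_min_image _ (fun z => dist x z) hFin hne
    have h1 : dist x z < δ ^ l := by have := hzF.2; rwa [mem_ball, dist_comm] at this
    refine ⟨z, hzF.1, h1, fun w hw => ?_⟩
    by_cases hwb : dist x w < δ ^ l
    · exact hzmin w ⟨hw, by rwa [mem_ball, dist_comm]⟩
    · push_neg at hwb; linarith
  choose near hnZ hnd hnm using hnear
  -- chain choice functions
  have hex0 : ∀ x : X, ∃ z, z ∈ Sset Z near 0 x := fun x =>
    S_nonempty hδ0 hδ hmax hnZ hnd hD hsep 0 x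
  choose p0 hp0 using hex0
  have hexk : ∀ (k : ℤ) (x z : X),
      ∃ w, z ∈ Sset Z near k x → (w ∈ Sset Z near (k+1) x ∧ near k w = z) := by
    intro k x z
    by_cases h : z ∈ Sset Z near k x
    · obtain ⟨w, hw1, hw2⟩ := S_child hδ0 hmono hnZ hnd hnm hD hsep h
      exact ⟨w, fun _ => ⟨hw1, hw2⟩⟩
    · exact ⟨z, fun hz => absurd hz h⟩
  choose pk hpk using hexk
  set c := chain near p0 pk with hc
  have hcm : ∀ (k : ℤ) (x : X), c k x ∈ Sset Z near k x :=
    fun k x => chain_mem hmono hnZ hnm hp0 hpk k x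
  have hca : ∀ (n : ℕ) (k : ℤ) (x : X), anc near n (k + n) (c (k + n) x) = c k x :=
    fun n k x => chain_anc hmono hnZ hnm hp0 hpk n k x
  have hcs : ∀ (k : ℤ) (x : X), near k (c (k+1) x) = c k x :=
    fun k x => chain_step hmono hnZ hnm hp0 hpk k x
  have hcZ : ∀ (k : ℤ) (x : X), c k x ∈ Z k := fun k x => (hcm k x).1
  refine ⟨fun k z => {x | c k x = z}, ?_, ?_, ?_, ?_, ?_⟩
  · -- countability
    have hZc : ∀ k : ℤ, (Z k).Countable := by
      intro k
      rcases isEmpty_or_nonempty X with hX | hne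
      · exact (Set.toFinite _).countable
      · obtain ⟨x0⟩ := hne
        have hsub : Z k ⊆ ⋃ n : ℕ, Z k ∩ ball x0 n := by
          intro z hz
          obtain ⟨n, hn⟩ := exists_nat_gt (dist z x0)
          exact Set.mem_iUnion.2 ⟨n, hz, mem_ball.2 hn⟩
        exact (Set.countable_iUnion fun n : ℕ =>
          (sep_finite hD (zpow_pos hδ0 k) (hsep k) x0 n).countable).mono hsub
    have hsub : {p : ℤ × X | p.2 ∈ Z p.1} ⊆
        ⋃ k : ℤ, (fun z => ((k, z) : ℤ × X)) '' Z k := by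
      rintro ⟨k, z⟩ hz
      exact Set.mem_iUnion.2 ⟨k, z, hz, rfl⟩
    exact (Set.countable_iUnion fun k => (hZc k).image _).mono hsub
  · -- covering
    intro k
    apply Set.eq_univ_of_forall
    intro x
    exact Set.mem_iUnion₂.2 ⟨c k x, hcZ k x, rfl⟩
  · -- nesting
    have key : ∀ (k l : ℤ) (z w : X), k ≤ l →
        {x | c k x = z} ∩ {x | c l x = w} = ∅ ∨ {x | c l x = w} ⊆ {x | c k x = z} := by
      intro k l z w hkl
      set n := (l - k).toNat with hn
      have hl : l = k + n := by omega
      by_cases h : anc near n l w = z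
      · right
        intro x hx
        simp only [Set.mem_setOf_eq] at hx ⊢
        have h2 := hca n k x
        rw [← hl, hx] at h2
        exact h2.symm.trans h
      · left
        rw [Set.eq_empty_iff_forall_notMem]
        rintro x ⟨hx1, hx2⟩
        simp only [Set.mem_setOf_eq] at hx1 hx2
        apply h
        have h2 := hca n k x
        rw [← hl, hx2] at h2
        rw [h2, hx1]
    intro k l z w hz hw
    rcases le_total k l with hkl | hlk
    · rcases key k l z w hkl with h | h
      · exact Or.inl h
      · exact Or.inr (Or.inr h)
    · rcases key l k w z hlk with h | h
      · left; rw [Set.inter_comm]; exact h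
      · exact Or.inr (Or.inl h)
  · -- inclusions
    intro k z hz
    constructor
    · intro x hx
      show c k x = z
      have hd1 : dist x (c (k+1) x) ≤ 2 * δ ^ (k+1) := S_dist hδ0 hδ hnd (hcm (k+1) x)
      have hd2 : dist x z < δ ^ k / 5 := mem_ball.1 hx
      have hpk' : (0:ℝ) < δ ^ k := zpow_pos hδ0 k
      have he : δ ^ (k+1) = δ ^ k * δ := zpow_add_one₀ (ne_of_gt hδ0) k
      have hlt : dist (c (k+1) x) z < δ ^ k / 2 := by
        calc dist (c (k+1) x) z ≤ dist (c (k+1) x) x + dist x z := dist_triangle _ _ _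
          _ < 2 * δ ^ (k+1) + δ ^ k / 5 := by rw [dist_comm (c (k+1) x) x]; linarith
          _ < δ ^ k / 2 := by rw [he]; nlinarith
      have := near_eq hsep hnZ hnm hz hlt
      rw [← hcs k x, this]
    · intro x hx
      have hx' : c k x = z := hx
      have hds := S_dist hδ0 hδ hnd (hcm k x)
      rw [hx'] at hds
      rw [mem_ball]
      have hpk' : (0:ℝ) < δ ^ k := zpow_pos hδ0 k
      linarith
  · -- union of descendants
    intro k m z hz
    apply Set.Subset.antisymm
    · intro x hx
      have hxZ : c (k + m) x ∈ Z (k + m) := hcZ _ x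
      have hsub : {y | c (k + (m:ℤ)) y = c (k + (m:ℤ)) x} ⊆ {y | c k y = z} := by
        intro y hy
        simp only [Set.mem_setOf_eq] at hy hx ⊢
        have h1 := hca m k y
        have h2 := hca m k x
        rw [hy] at h1
        exact (h1.symm.trans h2).trans hx
      exact Set.mem_iUnion₂.2 ⟨c (k + m) x, ⟨hxZ, hsub⟩, rfl⟩
    · intro x hx
      obtain ⟨w, hw, hxw⟩ := Set.mem_iUnion₂.1 hx
      exact hw.2 hxw
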